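/- Let μ > 0 and let C be an n×n real symmetric matrix with eigendecomposition C = Qᵀ D Q, where Q is orthogonal and D = diag(d₁, …, dₙ). Then the matrix S = Qᵀ E Q, with E = diag(e₁, …, eₙ) and eᵢ = (dᵢ + √(dᵢ² + 4μ))/2, is symmetric positive definite, satisfies S − C − μ S⁻¹ = 0, and is the unique minimizer over the cone of symmetric positive definite matrices of F_μ(S) = (1/2)‖S − C‖_F² − μ log det S. -/

import Mathlib

open Matrix

section AuxStmt5

variable {n : ℕ}

private lemma trace_eq_sum_eig' {A : Matrix (Fin n) (Fin n) ℝ} (hA : A.IsHermitian) :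
    A.trace = ∑ i, hA.eigenvalues i := by
  conv_lhs => rw [hA.spectral_theorem]
  rw [Unitary.conjStarAlgAut_apply, trace_mul_cycle, Unitary.coe_star_mul_self, one_mul, trace_diagonal]
  simp

private lemma log_det_le_trace' {A : Matrix (Fin n) (Fin n) ℝ} (hA : A.PosDef) :
    Real.log A.det ≤ A.trace - n := by
  have hd := hA.isHermitian.det_eq_prod_eigenvalues
  simp only [RCLike.ofReal_real_eq_id, id_eq, Function.comp] at hd
  rw [hd, trace_eq_sum_eig' hA.isHermitian,
    Real.log_prod (fun i _ => (hA.eigenvalues_pos i).ne')]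
  have h : ∀ i ∈ Finset.univ, Real.log (hA.isHermitian.eigenvalues i)
      ≤ hA.isHermitian.eigenvalues i - 1 :=
    fun i _ => Real.log_le_sub_one_of_pos (hA.eigenvalues_pos i)
  calc ∑ i, Real.log (hA.isHermitian.eigenvalues i)
      ≤ ∑ i, (hA.isHermitian.eigenvalues i - 1) := Finset.sum_le_sum h
    _ = (∑ i, hA.isHermitian.eigenvalues i) - n := by
        rw [Finset.sum_sub_distrib]; simp

private lemma posDef_conj' {A B : Matrix (Fin n) (Fin n) ℝ} (hA : A.PosDef)
    (hB : IsUnit B.det) : (Bᵀ * A * B).PosDef := by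
  have hB' : IsUnit B := (isUnit_iff_isUnit_det B).mpr hB
  have h := hA.conjTranspose_mul_mul_same (B := B) (Matrix.mulVec_injective_iff_isUnit.mpr hB')
  rwa [conjTranspose_eq_transpose_of_trivial] at h

open scoped MatrixOrder in
private lemma log_det_sub' {S X : Matrix (Fin n) (Fin n) ℝ} (hS : S.PosDef) (hX : X.PosDef) :
    Real.log X.det - Real.log S.det ≤ (S⁻¹ * X).trace - n := by
  have hSinv : S⁻¹.PosDef := hS.inv
  set R := CFC.sqrt S⁻¹ with hR
  have hRsym : Rᵀ = R := by
    rw [← conjTranspose_eq_transpose_of_trivial]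
    exact (CFC.sqrt_nonneg S⁻¹).posSemidef.isHermitian.eq
  have hRR : R * R = S⁻¹ := CFC.sqrt_mul_sqrt_self S⁻¹ hSinv.posSemidef.nonneg
  have hdet0 : R.det ≠ 0 := fun h => hSinv.det_pos.ne' (by rw [← hRR, det_mul, h, zero_mul])
  have hA : (Rᵀ * X * R).PosDef := posDef_conj' hX hdet0.isUnit
  have h1 := log_det_le_trace' hA
  have hds : R.det * R.det = S.det⁻¹ := by
    rw [← det_mul, hRR, det_nonsing_inv, Ring.inverse_eq_inv']
  have hdet : (Rᵀ * X * R).det = X.det * (S.det)⁻¹ := by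
    rw [det_mul, det_mul, det_transpose, ← hds]; ring
  have htr : (Rᵀ * X * R).trace = (S⁻¹ * X).trace := by
    rw [trace_mul_cycle, hRsym, hRR]
  rw [hdet, htr, Real.log_mul hX.det_pos.ne' (inv_ne_zero hS.det_pos.ne'),
    Real.log_inv] at h1
  linarith

private lemma trace_sq_expand' (M : Matrix (Fin n) (Fin n) ℝ) :
    (M * Mᵀ).trace = ∑ i, ∑ j, (M i j) ^ 2 := by
  simp [Matrix.trace, Matrix.diag, Matrix.mul_apply, sq]

private lemma trace_sq_nonneg' (M : Matrix (Fin n) (Fin n) ℝ) : 0 ≤ (M * Mᵀ).trace := by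
  rw [trace_sq_expand']
  exact Finset.sum_nonneg fun i _ => Finset.sum_nonneg fun j _ => sq_nonneg _

private lemma eq_zero_of_trace_sq' (M : Matrix (Fin n) (Fin n) ℝ)
    (h : (M * Mᵀ).trace ≤ 0) : M = 0 := by
  have h0 : (M * Mᵀ).trace = 0 := le_antisymm h (trace_sq_nonneg' M)
  rw [trace_sq_expand'] at h0
  ext i j
  have h1 := (Finset.sum_eq_zero_iff_of_nonneg
    (fun i _ => Finset.sum_nonneg fun j _ => sq_nonneg (M i j))).mp h0 i (Finset.mem_univ i)
  have h2 := (Finset.sum_eq_zero_iff_of_nonneg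
    (fun j _ => sq_nonneg (M i j))).mp h1 j (Finset.mem_univ j)
  simpa [pow_eq_zero_iff] using h2

end AuxStmt5

/-- The smoothing objective for the positive semidefinite cone:
`F_μ(X) = (1/2)‖X − C‖_F² − μ log det X`, with the Frobenius norm squared
expressed via the trace inner product as `tr((X − C)(X − C)ᵀ)`. -/
noncomputable def psdObj (n : ℕ) (μ : ℝ) (C X : Matrix (Fin n) (Fin n) ℝ) : ℝ :=
  (1 / 2) * Matrix.trace ((X - C) * (X - C)ᵀ) - μ * Real.log X.det

private lemma key_descent {n : ℕ} {μ : ℝ} (hμ : 0 < μ) {C S X : Matrix (Fin n) (Fin n) ℝ}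
    (hSsym : S.IsSymm) (hS : S.PosDef) (hCsym : C.IsSymm)
    (hopt : S - C - μ • S⁻¹ = 0) (hXsym : X.IsSymm) (hX : X.PosDef) :
    psdObj n μ C S + (1/2) * ((X - S) * (X - S)ᵀ).trace ≤ psdObj n μ C X := by
  have hXC : (X - C)ᵀ = X - C := by rw [transpose_sub, hXsym, hCsym]
  have hSC : (S - C)ᵀ = S - C := by rw [transpose_sub, hSsym, hCsym]
  have hXS : (X - S)ᵀ = X - S := by rw [transpose_sub, hXsym, hSsym]
  have comm : ∀ A B : Matrix (Fin n) (Fin n) ℝ, (A*B).trace = (B*A).trace :=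
    fun A B => trace_mul_comm A B
  have expand : ∀ A B : Matrix (Fin n) (Fin n) ℝ,
      ((A - B) * (A - B)).trace = (A*A).trace - 2*(B*A).trace + (B*B).trace := by
    intro A B
    rw [sub_mul, mul_sub, mul_sub, trace_sub, trace_sub, trace_sub, comm A B]
    ring
  have cross : ((S - C) * (X - S)).trace
      = (S*X).trace - (S*S).trace - (C*X).trace + (C*S).trace := by
    rw [sub_mul, mul_sub, mul_sub, trace_sub, trace_sub, trace_sub]; ring
  have hquad : ((X - C) * (X - C)).trace = ((S - C) * (S - C)).trace
      + ((X - S) * (X - S)).trace + 2 * ((S - C) * (X - S)).trace := by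
    rw [expand X C, expand S C, expand X S, cross, comm S X, comm C S]
    ring
  have hgrad : S - C = μ • S⁻¹ := sub_eq_zero.mp hopt
  have hgradtr : ((S - C) * (X - S)).trace = μ * (S⁻¹ * (X - S)).trace := by
    rw [hgrad, smul_mul_assoc, trace_smul]; rfl
  have hSS : S⁻¹ * S = 1 := nonsing_inv_mul S hS.det_pos.ne'.isUnit
  have hlog := log_det_sub' hS hX
  have htrn : (S⁻¹ * (X - S)).trace = (S⁻¹ * X).trace - n := by
    rw [mul_sub, trace_sub, hSS, trace_one]
    simp
  have hlog2 : μ * (Real.log X.det - Real.log S.det) ≤ μ * (S⁻¹ * (X - S)).trace := by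
    rw [htrn]
    exact mul_le_mul_of_nonneg_left hlog hμ.le
  simp only [psdObj, hXC, hSC, hXS]
  nlinarith [hquad, hgradtr, hlog2]

/-- Let `μ > 0` and let `C` be a real symmetric matrix with eigendecomposition
`C = Qᵀ D Q` (`Q` orthogonal, `D = diag(d)`). Then `S = Qᵀ E Q`, with
`E = diag(e)` and `eᵢ = (dᵢ + √(dᵢ² + 4μ))/2`, is symmetric positive definite,
satisfies `S − C − μS⁻¹ = 0`, and is the unique minimizer of
`F_μ(X) = (1/2)‖X − C‖_F² − μ log det X` over symmetric positive definite matrices. -/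
theorem stmt5 (n : ℕ) (μ : ℝ) (hμ : 0 < μ) (C Q : Matrix (Fin n) (Fin n) ℝ)
    (d : Fin n → ℝ) (hC : C.IsSymm) (hQ : Qᵀ * Q = 1)
    (hdecomp : C = Qᵀ * Matrix.diagonal d * Q) :
    let S : Matrix (Fin n) (Fin n) ℝ :=
      Qᵀ * Matrix.diagonal (fun i => (d i + Real.sqrt ((d i) ^ 2 + 4 * μ)) / 2) * Q
    S.IsSymm ∧ S.PosDef ∧
    S - C - μ • S⁻¹ = 0 ∧
    (∀ X : Matrix (Fin n) (Fin n) ℝ, X.IsSymm → X.PosDef →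
      psdObj n μ C S ≤ psdObj n μ C X) ∧
    (∀ X : Matrix (Fin n) (Fin n) ℝ, X.IsSymm → X.PosDef →
      (∀ Y : Matrix (Fin n) (Fin n) ℝ, Y.IsSymm → Y.PosDef →
        psdObj n μ C X ≤ psdObj n μ C Y) → X = S) := by
  intro S
  set e : Fin n → ℝ := fun i => (d i + Real.sqrt ((d i) ^ 2 + 4 * μ)) / 2 with he_def
  have hSdef : S = Qᵀ * Matrix.diagonal e * Q := rfl
  have hroot : ∀ i, |d i| < Real.sqrt ((d i) ^ 2 + 4 * μ) := by
    intro i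
    rw [← Real.sqrt_sq_eq_abs]
    exact Real.sqrt_lt_sqrt (sq_nonneg _) (by linarith)
  have he : ∀ i, 0 < e i := by
    intro i
    have h1 := hroot i
    have h2 := neg_abs_le (d i)
    simp only [he_def]
    linarith
  have hkey : ∀ i, e i * (e i - d i) = μ := by
    intro i
    have hsq : Real.sqrt ((d i) ^ 2 + 4 * μ) ^ 2 = (d i) ^ 2 + 4 * μ :=
      Real.sq_sqrt (by positivity)
    simp only [he_def]
    nlinarith [hsq]
  have hQ' : Q * Qᵀ = 1 := mul_eq_one_comm.mp hQ
  have hQdet : IsUnit Q.det := by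
    have h1 : Q.det * Q.det = 1 := by
      have := congrArg Matrix.det hQ
      simpa [det_mul, det_transpose] using this
    exact IsUnit.of_mul_eq_one _ h1
  -- symmetry
  have hSsym : S.IsSymm := by
    show Sᵀ = S
    rw [hSdef, transpose_mul, transpose_mul, transpose_transpose, diagonal_transpose,
      mul_assoc]
  -- positive definiteness
  have hSpd : S.PosDef := by
    rw [hSdef]
    exact posDef_conj' (Matrix.PosDef.diagonal he) hQdet
  -- inverse formula
  have hEinv : Matrix.diagonal e * Matrix.diagonal (fun i => (e i)⁻¹) = 1 := by
    rw [diagonal_mul_diagonal]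
    have : (fun i => e i * (e i)⁻¹) = fun _ : Fin n => (1 : ℝ) :=
      funext fun i => mul_inv_cancel₀ (he i).ne'
    rw [this, diagonal_one]
  have hSinv : S⁻¹ = Qᵀ * Matrix.diagonal (fun i => (e i)⁻¹) * Q := by
    apply inv_eq_right_inv
    rw [hSdef]
    calc Qᵀ * Matrix.diagonal e * Q * (Qᵀ * Matrix.diagonal (fun i => (e i)⁻¹) * Q)
        = Qᵀ * (Matrix.diagonal e * ((Q * Qᵀ) * (Matrix.diagonal (fun i => (e i)⁻¹) * Q))) := by
          simp only [mul_assoc]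
      _ = Qᵀ * (Matrix.diagonal e * Matrix.diagonal (fun i => (e i)⁻¹)) * Q := by
          rw [hQ', one_mul]; simp only [mul_assoc]
      _ = 1 := by rw [hEinv, mul_one, hQ]
  -- stationarity
  have hstat : S - C - μ • S⁻¹ = 0 := by
    have hdiff : (fun i => e i - d i) = fun i => μ * (e i)⁻¹ := by
      funext i
      have h := hkey i
      have hne : e i ≠ 0 := (he i).ne'
      rw [← h]
      field_simp
    have h1 : S - C = Qᵀ * Matrix.diagonal (fun i => μ * (e i)⁻¹) * Q := by
      rw [hSdef, hdecomp, ← sub_mul, ← mul_sub, diagonal_sub, hdiff]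
    have hdiag : Matrix.diagonal (fun i => μ * (e i)⁻¹)
        = μ • Matrix.diagonal (fun i => (e i)⁻¹) := by
      rw [← diagonal_smul]
      rfl
    have h2 : μ • S⁻¹ = Qᵀ * Matrix.diagonal (fun i => μ * (e i)⁻¹) * Q := by
      rw [hSinv, hdiag, mul_smul_comm, smul_mul_assoc]
    rw [h1, h2, sub_self]
  refine ⟨hSsym, hSpd, hstat, ?_, ?_⟩
  · intro X hXsym hXpd
    have h := key_descent hμ hSsym hSpd hC hstat hXsym hXpd
    have h2 := trace_sq_nonneg' (X - S)
    linarith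
  · intro X hXsym hXpd hmin
    have h := key_descent hμ hSsym hSpd hC hstat hXsym hXpd
    have h2 := hmin S hSsym hSpd
    have h3 : ((X - S) * (X - S)ᵀ).trace ≤ 0 := by linarith
    have h4 := eq_zero_of_trace_sq' (X - S) h3
    exact sub_eq_zero.mp h4
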